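/- Let σ > 1 and let c be either σ+1 or (2σ+1)(σ+1). Consider the scalar Schrödinger operator L = −d²/dx² + 1 − c·cosh(σx)^(−2) on the line. Then: (i) for every E ∈ (0,1], every twice continuously differentiable f ∈ L²(ℝ) with Lf = Ef vanishes identically (L has no eigenvalues in (0,1]); and (ii) the threshold 1 is not a resonance: every bounded twice continuously differentiable solution of Lf = f vanishes identically. -/

import Mathlib

noncomputable section

open Real MeasureTheory


def Sf (σ x : ℝ) : ℝ := 1 / Real.cosh (σ * x) ^ 2
def Tf (σ x : ℝ) : ℝ := Real.sinh (σ * x) / Real.cosh (σ * x)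

lemma cosh_pos' (σ x : ℝ) : 0 < Real.cosh (σ * x) := Real.cosh_pos (σ * x)

lemma Sf_pos (σ x : ℝ) : 0 < Sf σ x :=
  div_pos one_pos (pow_pos (cosh_pos' σ x) 2)

lemma Sf_le_one (σ x : ℝ) : Sf σ x ≤ 1 := by
  have h := Real.one_le_cosh (σ * x)
  rw [Sf, div_le_one (by positivity)]
  nlinarith

lemma Tf_sq (σ x : ℝ) : Tf σ x ^ 2 = 1 - Sf σ x := by
  have h := cosh_pos' σ x
  have h2 : Real.cosh (σ * x) ^ 2 - Real.sinh (σ * x) ^ 2 = 1 := Real.cosh_sq_sub_sinh_sq (σ * x)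
  rw [Tf, Sf]
  field_simp
  nlinarith

lemma Tf_abs_le_one (σ x : ℝ) : |Tf σ x| ≤ 1 := by
  have h := Tf_sq σ x
  have h2 := Sf_pos σ x
  nlinarith [sq_abs (Tf σ x), abs_nonneg (Tf σ x)]

lemma hasDerivAt_cosh' (σ x : ℝ) :
    HasDerivAt (fun y => Real.cosh (σ * y)) (σ * Real.sinh (σ * x)) x := by
  have h := (Real.hasDerivAt_cosh (σ * x)).comp x ((hasDerivAt_id x).const_mul σ)
  exact h.congr_deriv (by ring)

lemma hasDerivAt_sinh' (σ x : ℝ) :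
    HasDerivAt (fun y => Real.sinh (σ * y)) (σ * Real.cosh (σ * x)) x := by
  have h := (Real.hasDerivAt_sinh (σ * x)).comp x ((hasDerivAt_id x).const_mul σ)
  exact h.congr_deriv (by ring)

lemma hasDerivAt_Tf (σ x : ℝ) : HasDerivAt (Tf σ) (σ * Sf σ x) x := by
  have h := (hasDerivAt_sinh' σ x).div (hasDerivAt_cosh' σ x) (cosh_pos' σ x).ne'
  have e : (σ * Real.cosh (σ * x) * Real.cosh (σ * x) -
      Real.sinh (σ * x) * (σ * Real.sinh (σ * x))) / Real.cosh (σ * x) ^ 2 = σ * Sf σ x := by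
    have h2 : Real.cosh (σ * x) ^ 2 - Real.sinh (σ * x) ^ 2 = 1 := Real.cosh_sq_sub_sinh_sq (σ * x)
    rw [Sf]
    field_simp
    linear_combination σ * h2
  rw [e] at h
  exact h

lemma hasDerivAt_Sf (σ x : ℝ) : HasDerivAt (Sf σ) (-2 * σ * Tf σ x * Sf σ x) x := by
  have hc := cosh_pos' σ x
  have h := (((hasDerivAt_cosh' σ x).pow 2).inv (pow_ne_zero 2 hc.ne')).const_mul (1:ℝ)
  have e1 : Sf σ = fun y => 1 * (Real.cosh (σ * y) ^ 2)⁻¹ := by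
    funext y; rw [Sf]; ring
  rw [e1]
  refine h.congr_deriv ?_
  simp only [Tf, Sf, Pi.pow_apply]
  field_simp
  ring

/-- Darboux step: if `u'' = (1 - E - a(a+σ)·S)·u` then `g = u' + a·T·u`
satisfies `g'' = (1 - E - a(a-σ)·S)·g`. -/
lemma darboux {σ E a : ℝ} {u v : ℝ → ℝ}
    (hu : ∀ x, HasDerivAt u (v x) x)
    (hv : ∀ x, HasDerivAt v ((1 - E - (a * (a + σ)) * Sf σ x) * u x) x) :
    (∀ x, HasDerivAt (fun y => v y + a * Tf σ y * u y)
      ((1 - E - (a * (a + σ)) * Sf σ x) * u x + a * (σ * Sf σ x) * u x + a * Tf σ x * v x) x) ∧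
    (∀ x, HasDerivAt
      (fun y => (1 - E - (a * (a + σ)) * Sf σ y) * u y + a * (σ * Sf σ y) * u y + a * Tf σ y * v y)
      ((1 - E - (a * (a - σ)) * Sf σ x) * (v x + a * Tf σ x * u x)) x) := by
  constructor
  · intro x
    have h1 : HasDerivAt (fun y => a * Tf σ y * u y)
        (a * (σ * Sf σ x) * u x + a * Tf σ x * v x) x := by
      have h2 := (((hasDerivAt_Tf σ x).const_mul a).mul (hu x))
      exact h2.congr_deriv (by ring)
    have h3 := (hv x).add h1
    exact h3.congr_deriv (by ring)
  · intro x
    have hS := hasDerivAt_Sf σ x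
    have hT := hasDerivAt_Tf σ x
    have hA : HasDerivAt (fun y => (1 - E - (a * (a + σ)) * Sf σ y) * u y)
        ((-(a * (a + σ)) * (-2 * σ * Tf σ x * Sf σ x)) * u x
          + (1 - E - (a * (a + σ)) * Sf σ x) * v x) x := by
      have h2 : HasDerivAt (fun y => 1 - E - (a * (a + σ)) * Sf σ y)
          (-(a * (a + σ)) * (-2 * σ * Tf σ x * Sf σ x)) x := by
        have := (hS.const_mul (a * (a + σ))).const_sub (1 - E)
        exact this.congr_deriv (by ring)
      exact h2.mul (hu x)
    have hB : HasDerivAt (fun y => a * (σ * Sf σ y) * u y)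
        (a * σ * (-2 * σ * Tf σ x * Sf σ x) * u x + a * (σ * Sf σ x) * v x) x := by
      have h3 : HasDerivAt (fun y => a * (σ * Sf σ y)) (a * σ * (-2 * σ * Tf σ x * Sf σ x)) x := by
        have := (hS.const_mul σ).const_mul a
        exact this.congr_deriv (by ring)
      exact h3.mul (hu x)
    have hC : HasDerivAt (fun y => a * Tf σ y * u y)
        (a * (σ * Sf σ x) * u x + a * Tf σ x * v x) x := by
      have h2 := ((hT.const_mul a).mul (hu x))
      exact h2.congr_deriv (by ring)
    have hC' : HasDerivAt (fun y => a * Tf σ y * v y)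
        (a * (σ * Sf σ x) * v x + a * Tf σ x * ((1 - E - (a * (a + σ)) * Sf σ x) * u x)) x := by
      have h2 := ((hT.const_mul a).mul (hv x))
      exact h2.congr_deriv (by ring)
    have htot := (hA.add hB).add hC'
    exact htot.congr_deriv (by ring)

/-- Back-substitution: if additionally `u' + a·T·u = 0` and `1 - E - a² ≠ 0`, then `u = 0`. -/
lemma backsub {σ E a : ℝ} {u v : ℝ → ℝ} (hne : 1 - E - a ^ 2 ≠ 0)
    (hu : ∀ x, HasDerivAt u (v x) x)
    (hv : ∀ x, HasDerivAt v ((1 - E - (a * (a + σ)) * Sf σ x) * u x) x)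
    (hg : ∀ x, v x + a * Tf σ x * u x = 0) : ∀ x, u x = 0 := by
  intro x
  have hveq : v = fun y => -(a * Tf σ y * u y) := by
    funext y
    have := hg y
    linarith
  have h5 : v x = -(a * Tf σ x * u x) := by have := hg x; linarith
  have h1 : HasDerivAt v
      (-(a * (σ * Sf σ x) * u x + a * Tf σ x * (-(a * Tf σ x * u x)))) x := by
    rw [hveq]
    have h2 := ((((hasDerivAt_Tf σ x).const_mul a).mul (hu x))).neg
    refine h2.congr_deriv ?_
    rw [h5]
  have h4 := (hv x).unique h1
  have hts := Tf_sq σ x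
  have h6 : (1 - E - a ^ 2) * u x = 0 := by
    linear_combination h4 + a ^ 2 * u x * hts
  rcases mul_eq_zero.mp h6 with h | h
  · exact absurd h hne
  · exact h

lemma aux_unbounded {p u v : ℝ → ℝ} (hp : ∀ x, 0 < p x)
    (hu : ∀ x, HasDerivAt u (v x) x) (hv : ∀ x, HasDerivAt v (p x * u x) x)
    {B : ℝ} (hB : ∀ x, u x ≤ B) {a : ℝ} (ha : 0 < u a) (hva : 0 ≤ v a) : False := by
  have hucont : Continuous u := continuous_iff_continuousAt.mpr fun x => (hu x).continuousAt
  have hvcont : Continuous v := continuous_iff_continuousAt.mpr fun x => (hv x).continuousAt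
  have hud : ∀ x, deriv u x = v x := fun x => (hu x).deriv
  have hvd : ∀ x, deriv v x = p x * u x := fun x => (hv x).deriv
  -- Step 1 : u > 0 on [a, ∞)
  have hpos : ∀ x, a ≤ x → 0 < u x := by
    intro b hab
    by_contra hub
    push_neg at hub
    set K : Set ℝ := Set.Icc a b ∩ u ⁻¹' Set.Iic 0 with hK
    have hKcl : IsClosed K := (isClosed_Icc).inter (isClosed_Iic.preimage hucont)
    have hKne : K.Nonempty := ⟨b, ⟨hab, le_refl b⟩, hub⟩
    have hKbdd : BddBelow K := ⟨a, fun x hx => hx.1.1⟩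
    set c := sInf K with hc
    have hcK : c ∈ K := hKcl.csInf_mem hKne hKbdd
    have hac : a ≤ c := hcK.1.1
    have hcb : c ≤ b := hcK.1.2
    have huc : u c ≤ 0 := hcK.2
    have hac' : a ≠ c := fun h => by rw [← h] at huc; linarith
    have haclt : a < c := lt_of_le_of_ne hac hac'
    -- u > 0 on [a, c)
    have hposc : ∀ x, a ≤ x → x < c → 0 < u x := by
      intro x hax hxc
      by_contra hx
      push_neg at hx
      have : x ∈ K := ⟨⟨hax, le_trans hxc.le hcb⟩, hx⟩
      exact absurd (csInf_le hKbdd this) (not_le.mpr hxc)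
    -- v is monotone on [a, c]
    have hvmono : MonotoneOn v (Set.Icc a c) := by
      apply monotoneOn_of_deriv_nonneg (convex_Icc a c) hvcont.continuousOn
        (fun x _ => (hv x).differentiableAt.differentiableWithinAt)
      intro x hx
      rw [interior_Icc] at hx
      rw [hvd x]
      exact le_of_lt (mul_pos (hp x) (hposc x hx.1.le hx.2))
    have hvnon : ∀ x ∈ Set.Icc a c, 0 ≤ v x := fun x hx =>
      le_trans hva (hvmono (Set.left_mem_Icc.mpr hac) hx hx.1)
    have humono : MonotoneOn u (Set.Icc a c) := by
      apply monotoneOn_of_deriv_nonneg (convex_Icc a c) hucont.continuousOn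
        (fun x _ => (hu x).differentiableAt.differentiableWithinAt)
      intro x hx
      rw [hud x]
      exact hvnon x (interior_subset hx)
    have := humono (Set.left_mem_Icc.mpr hac) (Set.right_mem_Icc.mpr hac) hac
    linarith
  -- Step 2 : v strictly monotone on [a, ∞)
  have hvsm : StrictMonoOn v (Set.Ici a) := by
    apply strictMonoOn_of_deriv_pos (convex_Ici a) hvcont.continuousOn
    intro x hx
    rw [interior_Ici] at hx
    rw [hvd x]
    exact mul_pos (hp x) (hpos x hx.le)
  set ε := v (a + 1) with hε
  have hεpos : 0 < ε := by
    have h1 : a ∈ Set.Ici a := Set.self_mem_Ici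
    have h2 : a + 1 ∈ Set.Ici a := Set.mem_Ici.mpr (by linarith)
    have := hvsm h1 h2 (by linarith)
    linarith
  -- Step 3: linear growth
  have hgrow : ∀ x, a + 1 ≤ x → u (a+1) + ε * (x - (a+1)) ≤ u x := by
    have hder : ∀ x : ℝ, HasDerivAt (fun y => u y - ε * y) (v x - ε) x := by
      intro x
      have h1 : HasDerivAt (fun y : ℝ => ε * y) (ε * 1) x := (hasDerivAt_id x).const_mul ε
      exact ((hu x).sub h1).congr_deriv (by ring)
    have hmono : MonotoneOn (fun y => u y - ε * y) (Set.Ici (a+1)) := by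
      apply monotoneOn_of_deriv_nonneg (convex_Ici (a+1))
        (continuous_iff_continuousAt.mpr fun x => (hder x).continuousAt).continuousOn
        (fun x _ => (hder x).differentiableAt.differentiableWithinAt)
      intro x hx
      rw [interior_Ici] at hx
      rw [(hder x).deriv]
      have h2 : ε < v x := hvsm (Set.mem_Ici.mpr (by linarith)) (Set.mem_Ici.mpr (by linarith [Set.mem_Ioi.mp hx])) (Set.mem_Ioi.mp hx)
      linarith
    intro x hx
    have := hmono (Set.self_mem_Ici) (Set.mem_Ici.mpr hx) hx
    simp only at this
    nlinarith
  -- Step 4: contradiction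
  set x₀ := a + 1 + (B - u (a+1)) / ε + 1 with hx₀
  have hBu : u (a+1) ≤ B := hB _
  have hx₀ge : a + 1 ≤ x₀ := by
    have h3 : 0 ≤ (B - u (a+1)) / ε := div_nonneg (by linarith) hεpos.le
    rw [hx₀]
    linarith
  have := hgrow x₀ hx₀ge
  have hval : ε * (x₀ - (a+1)) = (B - u (a+1)) + ε := by
    rw [hx₀]
    field_simp
    ring
  have := hB x₀
  nlinarith

lemma aux_pos_case {p u v : ℝ → ℝ} (hp : ∀ x, 0 < p x)
    (hu : ∀ x, HasDerivAt u (v x) x) (hv : ∀ x, HasDerivAt v (p x * u x) x)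
    {B : ℝ} (hB : ∀ x, u x ≤ B) {a : ℝ} (ha : 0 < u a) : False := by
  rcases le_or_gt 0 (v a) with h | h
  · exact aux_unbounded hp hu hv hB ha h
  · -- reflect around a
    set g : ℝ → ℝ := fun x => 2 * a - x with hg
    have hgd : ∀ x, HasDerivAt g (-1) x := by
      intro x
      exact (hasDerivAt_id x).const_sub (2 * a)
    have hU : ∀ x, HasDerivAt (fun x => u (g x)) (-v (g x)) x := by
      intro x
      have := (hu (g x)).comp x (hgd x)
      exact this.congr_deriv (by ring)
    have hV : ∀ x, HasDerivAt (fun x => -v (g x)) (p (g x) * u (g x)) x := by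
      intro x
      have := ((hv (g x)).comp x (hgd x)).neg
      exact this.congr_deriv (by ring)
    apply aux_unbounded (p := fun x => p (g x)) (fun x => hp (g x)) hU hV
      (B := B) (fun x => hB (g x)) (a := a)
    · have e : g a = a := by rw [hg]; ring_nf
      show 0 < u (g a)
      rw [e]; exact ha
    · have e : g a = a := by rw [hg]; ring_nf
      show 0 ≤ -v (g a)
      rw [e]; linarith

lemma aux_zero {p u v : ℝ → ℝ} (hp : ∀ x, 0 < p x)
    (hu : ∀ x, HasDerivAt u (v x) x) (hv : ∀ x, HasDerivAt v (p x * u x) x)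
    {B : ℝ} (hB : ∀ x, |u x| ≤ B) : ∀ x, u x = 0 := by
  intro a
  rcases lt_trichotomy (u a) 0 with h | h | h
  · exfalso
    apply aux_pos_case (u := fun x => -u x) (v := fun x => -v x) hp
      (fun x => (hu x).neg) (fun x => (hv x).neg.congr_deriv (by beta_reduce; ring))
      (B := B) (fun x => by have h2 := abs_le.mp (hB x); show -u x ≤ B; linarith)
      (a := a) (by show (0:ℝ) < -u a; linarith)
  · exact h
  · exfalso
    exact aux_pos_case hp hu hv (fun x => le_trans (le_abs_self _) (hB x)) h

/-- Landau-type: if `u` is bounded and `u'' = w` is bounded, then `u'` is bounded. -/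
lemma deriv_bdd {u v w : ℝ → ℝ} (hu : ∀ x, HasDerivAt u (v x) x)
    (hv : ∀ x, HasDerivAt v (w x) x) (hw : Continuous w)
    {B C : ℝ} (hB : ∀ x, |u x| ≤ B) (hC : ∀ x, |w x| ≤ C) :
    ∀ x, |v x| ≤ 2 * B + C := by
  intro x
  have hucont : Continuous u := continuous_iff_continuousAt.mpr fun y => (hu y).continuousAt
  obtain ⟨ξ, hξ, hslope⟩ := exists_hasDerivAt_eq_slope u v (by linarith : x < x + 1)
    hucont.continuousOn (fun y _ => hu y)
  have h1 : |v ξ| ≤ 2 * B := by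
    rw [hslope]
    have : x + 1 - x = 1 := by ring
    rw [this, div_one]
    have := hB x
    have := hB (x+1)
    have := abs_sub (u (x+1)) (u x)
    calc |u (x+1) - u x| ≤ |u (x+1)| + |u x| := abs_sub _ _
      _ ≤ 2 * B := by linarith
  have hint : ∫ t in x..ξ, w t = v ξ - v x :=
    intervalIntegral.integral_eq_sub_of_hasDerivAt (fun t _ => hv t)
      (hw.intervalIntegrable x ξ)
  have h2 : |∫ t in x..ξ, w t| ≤ C * |ξ - x| := by
    rw [← Real.norm_eq_abs (∫ t in x..ξ, w t)]
    apply intervalIntegral.norm_integral_le_of_norm_le_const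
    intro t _
    rw [Real.norm_eq_abs]
    exact hC t
  have h3 : |ξ - x| ≤ 1 := by
    rw [abs_le]
    constructor <;> [linarith [hξ.1]; linarith [hξ.2]]
  have hC0 : 0 ≤ C := le_trans (abs_nonneg _) (hC x)
  have h4 : |v ξ - v x| ≤ C := by
    rw [← hint]
    calc |∫ t in x..ξ, w t| ≤ C * |ξ - x| := h2
      _ ≤ C * 1 := by nlinarith
      _ = C := mul_one C
  have := abs_le.mp h1
  have := abs_le.mp h4
  rw [abs_le]
  constructor <;> linarith

/-- If `u² ` is integrable and `u'' = q·u` with `|q| ≤ M`, then `u` is bounded. -/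
lemma sq_int_bdd {u v q : ℝ → ℝ} (hu : ∀ x, HasDerivAt u (v x) x)
    (hv : ∀ x, HasDerivAt v (q x * u x) x) {M : ℝ} (hM : ∀ x, |q x| ≤ M)
    (hL2 : Integrable (fun x => (u x) ^ 2)) : ∃ B, ∀ x, |u x| ≤ B := by
  have hucont : Continuous u := continuous_iff_continuousAt.mpr fun y => (hu y).continuousAt
  have hvcont : Continuous v := continuous_iff_continuousAt.mpr fun y => (hv y).continuousAt
  have hM0 : 0 ≤ M := le_trans (abs_nonneg _) (hM 0)
  set w : ℝ → ℝ := fun x => u x * u x with hwdef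
  have hL2' : Integrable w := by simpa [pow_two] using hL2
  have hwc : Continuous w := by fun_prop
  have hw0 : ∀ x, 0 ≤ w x := fun x => mul_self_nonneg _
  set I := ∫ x, w x with hI
  have hI0 : 0 ≤ I := integral_nonneg hw0
  -- interval integrals of w are bounded by I
  have hIb : ∀ a b : ℝ, a ≤ b → ∫ t in a..b, w t ≤ I := by
    intro a b hab
    rw [intervalIntegral.integral_of_le hab]
    exact setIntegral_le_integral hL2' (Filter.Eventually.of_forall hw0)
  have hW : ∀ a b : ℝ, |∫ t in a..b, w t| ≤ I := by
    intro a b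
    rcases le_total a b with hab | hab
    · rw [abs_of_nonneg (intervalIntegral.integral_nonneg hab (fun t _ => hw0 t))]
      exact hIb a b hab
    · rw [intervalIntegral.integral_symm, abs_neg,
        abs_of_nonneg (intervalIntegral.integral_nonneg hab (fun t _ => hw0 t))]
      exact hIb b a hab
  -- main bound
  refine ⟨Real.sqrt (I + 1 + 2 * M * I), fun a => ?_⟩
  -- define W, G, z
  set W : ℝ → ℝ := fun t => ∫ s in a..t, w s with hWdef
  set G : ℝ → ℝ := fun t => ∫ s in a..t, W s with hGdef
  have hWd : ∀ t, HasDerivAt W (w t) t := by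
    intro t
    exact intervalIntegral.integral_hasDerivAt_right (hwc.intervalIntegrable a t)
      (hwc.stronglyMeasurableAtFilter _ _) hwc.continuousAt
  have hWcont : Continuous W := continuous_iff_continuousAt.mpr fun y => (hWd y).continuousAt
  have hGd : ∀ t, HasDerivAt G (W t) t := by
    intro t
    exact intervalIntegral.integral_hasDerivAt_right (hWcont.intervalIntegrable a t)
      (hWcont.stronglyMeasurableAtFilter _ _) hWcont.continuousAt
  set z : ℝ → ℝ := fun t => w t + 2 * M * G t with hzdef
  set zd : ℝ → ℝ := fun t => (v t * u t + u t * v t) + 2 * M * W t with hzddef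
  have hzd : ∀ t, HasDerivAt z (zd t) t := by
    intro t
    exact ((hu t).mul (hu t)).add ((hGd t).const_mul (2 * M))
  have hzdd : ∀ t, HasDerivAt zd
      (((q t * u t) * u t + v t * v t + (v t * v t + u t * (q t * u t))) + 2 * M * w t) t := by
    intro t
    exact (((hv t).mul (hu t)).add ((hu t).mul (hv t))).add ((hWd t).const_mul (2 * M))
  have hconv : ConvexOn ℝ Set.univ z := by
    apply convexOn_of_hasDerivWithinAt2_nonneg convex_univ
      (continuous_iff_continuousAt.mpr fun y => (hzd y).continuousAt).continuousOn
      (f' := zd) (f'' := fun t => ((q t * u t) * u t + v t * v t + (v t * v t + u t * (q t * u t))) + 2 * M * w t)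
    · intro x _
      exact (hzd x).hasDerivWithinAt
    · intro x _
      exact (hzdd x).hasDerivWithinAt
    · intro x _
      have h1 : |q x| * (u x)^2 ≤ M * (u x)^2 := by
        apply mul_le_mul_of_nonneg_right (hM x) (sq_nonneg _)
      have h2 : -(M * (u x)^2) ≤ q x * (u x)^2 := by
        have := neg_abs_le (q x)
        nlinarith [sq_nonneg (u x)]
      have h3 : w x = u x * u x := rfl
      nlinarith [sq_nonneg (v x), sq_nonneg (u x), pow_two (u x)]
  -- G bound for |t - a| ≤ 1
  have hGb : ∀ t : ℝ, |t - a| ≤ 1 → |G t| ≤ I := by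
    intro t ht
    have h1 : |G t| ≤ I * |t - a| := by
      rw [← Real.norm_eq_abs (G t)]
      apply intervalIntegral.norm_integral_le_of_norm_le_const
      intro s _
      rw [Real.norm_eq_abs]
      exact hW a s
    calc |G t| ≤ I * |t - a| := h1
      _ ≤ I * 1 := by nlinarith [abs_nonneg (t - a)]
      _ = I := mul_one I
  -- find good points on either side
  have hfind : ∀ s : ℝ, (∀ h : ℝ, h ∈ Set.Icc s (s+1) → I + 1 ≤ w h) → False := by
    intro s hcon
    have h1 : ∫ t in s..(s+1), (I + 1) ≤ ∫ t in s..(s+1), w t := by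
      apply intervalIntegral.integral_mono_on (by linarith)
        (intervalIntegrable_const) (hwc.intervalIntegrable _ _)
      intro t ht
      exact hcon t ht
    rw [intervalIntegral.integral_const] at h1
    have h2 := hIb s (s+1) (by linarith)
    simp at h1
    linarith
  have hplus : ∃ h : ℝ, h ∈ Set.Icc a (a+1) ∧ w h ≤ I + 1 := by
    by_contra hcon
    push_neg at hcon
    exact hfind a (fun h hh => (hcon h hh).le)
  have hminus : ∃ h : ℝ, h ∈ Set.Icc (a-1) a ∧ w h ≤ I + 1 := by
    by_contra hcon
    push_neg at hcon
    apply hfind (a-1)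
    intro h hh
    have : h ∈ Set.Icc (a-1) a := by
      constructor
      · exact hh.1
      · have := hh.2; linarith
    exact (hcon h this).le
  obtain ⟨tp, htp, hwp⟩ := hplus
  obtain ⟨tm, htm, hwm⟩ := hminus
  -- convexity: z a ≤ max (z tm) (z tp)
  have hseg : a ∈ segment ℝ tm tp := by
    rw [segment_eq_Icc (le_trans htm.2 htp.1)]
    exact ⟨htm.2, htp.1⟩
  have hza : z a ≤ max (z tm) (z tp) :=
    hconv.le_on_segment (Set.mem_univ tm) (Set.mem_univ tp) hseg
  have hGa : G a = 0 := intervalIntegral.integral_same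
  have hzb : ∀ t : ℝ, |t - a| ≤ 1 → w t ≤ I + 1 → z t ≤ I + 1 + 2 * M * I := by
    intro t ht hwt
    have h1 := hGb t ht
    have h2 : 2 * M * G t ≤ 2 * M * I := by nlinarith [abs_le.mp h1]
    show w t + 2 * M * G t ≤ I + 1 + 2 * M * I
    linarith
  have hzm : z tm ≤ I + 1 + 2 * M * I := by
    apply hzb tm _ hwm
    rw [abs_le]; constructor <;> [linarith [htm.1]; linarith [htm.2]]
  have hzp : z tp ≤ I + 1 + 2 * M * I := by
    apply hzb tp _ hwp
    rw [abs_le]; constructor <;> [linarith [htp.1]; linarith [htp.2]]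
  have hwa : w a ≤ I + 1 + 2 * M * I := by
    have : z a = w a := by show w a + 2 * M * G a = w a; rw [hGa]; ring
    rw [← this]
    exact le_trans hza (max_le hzm hzp)
  have : |u a| = Real.sqrt (w a) := by
    rw [hwdef]
    exact (Real.sqrt_mul_self_eq_abs (u a)).symm
  rw [this]
  exact Real.sqrt_le_sqrt hwa

/-- The engine for the operator with potential `(σ+1)·sech²(σx)` (after one Darboux step the
potential becomes negative-definite and a convexity argument applies). -/
lemma real_minus {σ E : ℝ} (hσ : 1 < σ) (hE : 0 < E) (hE1 : E ≤ 1)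
    {u v : ℝ → ℝ} (hu : ∀ x, HasDerivAt u (v x) x)
    (hv : ∀ x, HasDerivAt v ((1 - E - ((1:ℝ) * (1 + σ)) * Sf σ x) * u x) x)
    {B : ℝ} (hB : ∀ x, |u x| ≤ B) : ∀ x, u x = 0 := by
  have hB0 : 0 ≤ B := le_trans (abs_nonneg _) (hB 0)
  have hucont : Continuous u := continuous_iff_continuousAt.mpr fun y => (hu y).continuousAt
  have hSc : Continuous (Sf σ) := by
    apply Continuous.div continuous_const (by fun_prop)
    intro x
    exact (pow_pos (cosh_pos' σ x) 2).ne'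
  have hqb : ∀ x, |(1 - E - ((1:ℝ) * (1 + σ)) * Sf σ x) * u x| ≤ (2 + σ) * B := by
    intro x
    rw [abs_mul]
    have h1 : |1 - E - ((1:ℝ) * (1 + σ)) * Sf σ x| ≤ 2 + σ := by
      have := Sf_pos σ x
      have := Sf_le_one σ x
      rw [abs_le]
      constructor <;> nlinarith
    have h2 := hB x
    nlinarith [abs_nonneg (u x)]
  have hvB := deriv_bdd hu hv
    ((continuous_const.sub (continuous_const.mul hSc)).mul hucont) hB hqb
  obtain ⟨hg, hg1⟩ := darboux (a := (1:ℝ)) hu hv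
  have hgB : ∀ x, |v x + 1 * Tf σ x * u x| ≤ (2 * B + (2 + σ) * B) + B := by
    intro x
    have h1 := hvB x
    have h2 := hB x
    have h3 := Tf_abs_le_one σ x
    calc |v x + 1 * Tf σ x * u x| ≤ |v x| + |1 * Tf σ x * u x| := abs_add_le _ _
      _ ≤ (2 * B + (2 + σ) * B) + B := by
          rw [one_mul, abs_mul]
          nlinarith [abs_nonneg (u x), abs_nonneg (Tf σ x)]
  have hp : ∀ x, 0 < 1 - E - ((1:ℝ) * (1 - σ)) * Sf σ x := by
    intro x
    have := Sf_pos σ x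
    have := Sf_le_one σ x
    nlinarith
  have hgzero : ∀ x, v x + 1 * Tf σ x * u x = 0 := by
    have := aux_zero (p := fun x => 1 - E - ((1:ℝ) * (1 - σ)) * Sf σ x) hp hg hg1 hgB
    exact this
  apply backsub (a := (1:ℝ)) (by intro h; rw [one_pow] at h; linarith : 1 - E - (1:ℝ) ^ 2 ≠ 0)
    hu hv hgzero

lemma real_main {σ E c : ℝ} (hσ : 1 < σ) (hE : 0 < E) (hE1 : E ≤ 1)
    (hc : c = σ + 1 ∨ c = (2 * σ + 1) * (σ + 1))
    {u v : ℝ → ℝ} (hu : ∀ x, HasDerivAt u (v x) x)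
    (hv : ∀ x, HasDerivAt v ((1 - E - c * Sf σ x) * u x) x)
    {B : ℝ} (hB : ∀ x, |u x| ≤ B) : ∀ x, u x = 0 := by
  have hB0 : 0 ≤ B := le_trans (abs_nonneg _) (hB 0)
  have hucont : Continuous u := continuous_iff_continuousAt.mpr fun y => (hu y).continuousAt
  have hSc : Continuous (Sf σ) := by
    apply Continuous.div continuous_const (by fun_prop)
    intro x
    exact (pow_pos (cosh_pos' σ x) 2).ne'
  rcases hc with hc | hc
  · -- c = σ + 1 : one Darboux step
    have hv1 : ∀ x, HasDerivAt v ((1 - E - ((1:ℝ) * (1 + σ)) * Sf σ x) * u x) x := by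
      intro x
      rw [show (1:ℝ) * (1 + σ) = c by rw [hc]; ring]
      exact hv x
    exact real_minus hσ hE hE1 hu hv1 hB
  · -- c = (2σ+1)(σ+1) : two Darboux steps
    set a : ℝ := σ + 1 with ha
    have hv1 : ∀ x, HasDerivAt v ((1 - E - (a * (a + σ)) * Sf σ x) * u x) x := by
      intro x
      rw [show a * (a + σ) = c by rw [hc, ha]; ring]
      exact hv x
    -- bound v
    have hK : 0 < a * (a + σ) := by rw [ha]; nlinarith
    have hqb : ∀ x, |(1 - E - (a * (a + σ)) * Sf σ x) * u x| ≤ (1 + a * (a + σ)) * B := by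
      intro x
      rw [abs_mul]
      have hS1 := Sf_pos σ x
      have hS2 := Sf_le_one σ x
      have hKS : a * (a + σ) * Sf σ x ≤ a * (a + σ) := by nlinarith
      have hKS0 : 0 < a * (a + σ) * Sf σ x := mul_pos hK hS1
      have h1 : |1 - E - (a * (a + σ)) * Sf σ x| ≤ 1 + a * (a + σ) := by
        rw [abs_le]
        constructor <;> linarith
      have h2 := hB x
      exact mul_le_mul h1 h2 (abs_nonneg _) (by linarith)
    have hvB := deriv_bdd hu hv1
      ((continuous_const.sub (continuous_const.mul hSc)).mul hucont) hB hqb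
    obtain ⟨hg, hg1⟩ := darboux (a := a) hu hv1
    have hgB : ∀ x, |v x + a * Tf σ x * u x| ≤ (2 * B + (1 + a * (a + σ)) * B) + a * B := by
      intro x
      have h1 := hvB x
      have h2 := hB x
      have h3 := Tf_abs_le_one σ x
      have ha0 : 0 < a := by rw [ha]; linarith
      calc |v x + a * Tf σ x * u x| ≤ |v x| + |a * Tf σ x * u x| := abs_add_le _ _
        _ ≤ (2 * B + (1 + a * (a + σ)) * B) + a * B := by
            rw [abs_mul, abs_mul, abs_of_pos ha0]
            have htu : |Tf σ x| * |u x| ≤ B := by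
              nlinarith [abs_nonneg (u x), abs_nonneg (Tf σ x)]
            nlinarith [mul_le_mul_of_nonneg_left htu ha0.le]
    -- the transformed pair satisfies the σ+1 system
    have hg1' : ∀ x, HasDerivAt
        (fun y => (1 - E - (a * (a + σ)) * Sf σ y) * u y + a * (σ * Sf σ y) * u y
          + a * Tf σ y * v y)
        ((1 - E - ((1:ℝ) * (1 + σ)) * Sf σ x) * (v x + a * Tf σ x * u x)) x := by
      intro x
      rw [show (1:ℝ) * (1 + σ) = a * (a - σ) by rw [ha]; ring]
      exact hg1 x
    have hgzero : ∀ x, v x + a * Tf σ x * u x = 0 :=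
      real_minus hσ hE hE1 hg hg1' hgB
    apply backsub (a := a) _ hu hv1 hgzero
    rw [ha]
    nlinarith


/-- The scalar Schrödinger operator `L = −d²/dx² + 1 − c·cosh(σx)^(−2)` applied to `f`. -/
def scalarL (σ c : ℝ) (f : ℝ → ℂ) (x : ℝ) : ℂ :=
  -(iteratedDeriv 2 f x) + f x - ((c / Real.cosh (σ * x) ^ 2 : ℝ) : ℂ) * f x

lemma setup {σ c E : ℝ} {f : ℝ → ℂ} (hf : ContDiff ℝ 2 f)
    (hode : ∀ x, scalarL σ c f x = (E : ℂ) * f x) :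
    (∀ x, HasDerivAt (fun y => (f y).re) ((deriv f x).re) x) ∧
    (∀ x, HasDerivAt (fun y => (deriv f y).re) ((1 - E - c * Sf σ x) * (f x).re) x) ∧
    (∀ x, HasDerivAt (fun y => (f y).im) ((deriv f x).im) x) ∧
    (∀ x, HasDerivAt (fun y => (deriv f y).im) ((1 - E - c * Sf σ x) * (f x).im) x) := by
  have hd1 : Differentiable ℝ f := hf.differentiable (by norm_num)
  have h21 : (2 : WithTop ℕ∞) = 1 + 1 := by norm_num
  have hcd : ContDiff ℝ 1 (deriv f) := (contDiff_succ_iff_deriv.mp (h21 ▸ hf)).2.2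
  have hd2 : Differentiable ℝ (deriv f) := hcd.differentiable one_ne_zero
  have hODE : ∀ x, deriv (deriv f) x = ((1 - E - c * Sf σ x : ℝ) : ℂ) * f x := by
    intro x
    have h := hode x
    rw [scalarL] at h
    have h2 : iteratedDeriv 2 f = deriv (deriv f) := by
      rw [show (2:ℕ) = 1 + 1 from rfl, iteratedDeriv_succ, iteratedDeriv_one]
    rw [h2] at h
    have h3 : (c / Real.cosh (σ * x) ^ 2 : ℝ) = (c * Sf σ x : ℝ) := by
      rw [Sf]; ring
    rw [h3] at h
    push_cast
    push_cast at h
    linear_combination -h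
  refine ⟨fun x => ?_, fun x => ?_, fun x => ?_, fun x => ?_⟩
  · exact Complex.reCLM.hasFDerivAt.comp_hasDerivAt x (hd1 x).hasDerivAt
  · have h := Complex.reCLM.hasFDerivAt.comp_hasDerivAt x (hd2 x).hasDerivAt
    rw [hODE x] at h
    refine h.congr_deriv ?_
    simp [Complex.mul_re]
  · exact Complex.imCLM.hasFDerivAt.comp_hasDerivAt x (hd1 x).hasDerivAt
  · have h := Complex.imCLM.hasFDerivAt.comp_hasDerivAt x (hd2 x).hasDerivAt
    rw [hODE x] at h
    refine h.congr_deriv ?_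
    simp [Complex.mul_im]

theorem stmt_14 (σ : ℝ) (hσ : 1 < σ) (c : ℝ)
    (hc : c = σ + 1 ∨ c = (2 * σ + 1) * (σ + 1)) :
    (∀ E : ℝ, 0 < E → E ≤ 1 →
      ∀ f : ℝ → ℂ, ContDiff ℝ 2 f → MemLp f 2 volume →
        (∀ x : ℝ, scalarL σ c f x = (E : ℂ) * f x) → f = 0) ∧
    (∀ f : ℝ → ℂ, ContDiff ℝ 2 f → (∃ B : ℝ, ∀ x : ℝ, ‖f x‖ ≤ B) →
      (∀ x : ℝ, scalarL σ c f x = f x) → f = 0) := by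
  have hM : ∀ E : ℝ, 0 < E → E ≤ 1 → ∀ x : ℝ, |1 - E - c * Sf σ x| ≤ 1 + |c| := by
    intro E hE0 hE1 x
    have h1 : |c * Sf σ x| ≤ |c| := by
      rw [abs_mul, abs_of_pos (Sf_pos σ x)]
      nlinarith [abs_nonneg c, Sf_le_one σ x, Sf_pos σ x]
    have h2 := abs_le.mp h1
    rw [abs_le]
    constructor <;> [linarith [h2.1]; linarith [h2.2]]
  constructor
  · intro E hE0 hE1 f hf hL2 hode
    obtain ⟨hu, hv, hu', hv'⟩ := setup hf hode
    have hsqre : Integrable (fun x => (f x).re ^ 2) := by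
      have := (hL2.re).integrable_sq
      exact this
    have hsqim : Integrable (fun x => (f x).im ^ 2) := by
      have := (hL2.im).integrable_sq
      exact this
    obtain ⟨B1, hB1⟩ := sq_int_bdd hu hv (hM E hE0 hE1) hsqre
    obtain ⟨B2, hB2⟩ := sq_int_bdd hu' hv' (hM E hE0 hE1) hsqim
    have hre := real_main hσ hE0 hE1 hc hu hv hB1
    have him := real_main hσ hE0 hE1 hc hu' hv' hB2
    funext x
    exact Complex.ext (hre x) (him x)
  · intro f hf ⟨B, hB⟩ hode
    have hode' : ∀ x, scalarL σ c f x = ((1:ℝ) : ℂ) * f x := by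
      intro x
      rw [hode x]
      push_cast
      rw [one_mul]
    obtain ⟨hu, hv, hu', hv'⟩ := setup hf hode'
    have hBre : ∀ x, |(f x).re| ≤ B := fun x =>
      le_trans (Complex.abs_re_le_norm (f x)) (hB x)
    have hBim : ∀ x, |(f x).im| ≤ B := fun x =>
      le_trans (Complex.abs_im_le_norm (f x)) (hB x)
    have hre := real_main hσ one_pos le_rfl hc hu hv hBre
    have him := real_main hσ one_pos le_rfl hc hu' hv' hBim
    funext x
    exact Complex.ext (hre x) (him x)
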